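/- Let a < b be reals and let p, ε, ν : [a,b] → ℝ be differentiable functions with 0 < p(s) ≤ ε(s) for all s, p nondecreasing, and ν'(s) = −p'(s)/(ε(s) + p(s)) for all s ∈ [a,b]. Then for all s, t ∈ [a,b] with s ≤ t one has e^{−ν(t)} ≤ e^{−ν(s)} · √(p(t)/p(s)). -/

import Mathlib

open Set

/-- Derivative of a monotone function is nonnegative at interior points. -/
lemma deriv_nonneg_of_monotoneOn {a b x : ℝ} {p : ℝ → ℝ} {d : ℝ}
    (hx : x ∈ Ioo a b) (hmono : MonotoneOn p (Icc a b))
    (hd : HasDerivAt p d x) : 0 ≤ d := by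
  have h1 : HasDerivWithinAt p d (Ioi x) x := hd.hasDerivWithinAt
  rw [hasDerivWithinAt_iff_tendsto_slope] at h1
  have hset : Ioi x \ {x} = Ioi x := by
    ext y; simp (config := {contextual := true}) [lt_irrefl, ne_of_gt]
  rw [hset] at h1
  refine ge_of_tendsto h1 ?_
  have hev : ∀ᶠ y in nhdsWithin x (Ioi x), y ∈ Ioo x b := by
    apply mem_nhdsWithin.2
    exact ⟨Iio b, isOpen_Iio, hx.2, by rintro y ⟨hy1, hy2⟩; exact ⟨hy2, hy1⟩⟩
  filter_upwards [hev] with y hy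
  have hxy : x < y := hy.1
  have hxm : x ∈ Icc a b := ⟨hx.1.le, hx.2.le⟩
  have hym : y ∈ Icc a b := ⟨hx.1.le.trans hxy.le, hy.2.le⟩
  have := hmono hxm hym hxy.le
  rw [slope_def_field]
  exact div_nonneg (by linarith) (by linarith)

/-- If `0 < p ≤ ε` on `[a,b]`, `p` is nondecreasing, `ε` is
differentiable, and `ν' = −p'/(ε + p)` on `[a,b]`, then for `s ≤ t` in `[a,b]`,
`e^{−ν(t)} ≤ e^{−ν(s)}·√(p(t)/p(s))`. -/
theorem stmt6 (a b : ℝ) (hab : a < b) (p ε ν p' : ℝ → ℝ)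
    (hpε : ∀ s ∈ Icc a b, 0 < p s ∧ p s ≤ ε s)
    (hpmono : MonotoneOn p (Icc a b))
    (hp : ∀ s ∈ Icc a b, HasDerivWithinAt p (p' s) (Icc a b) s)
    (hε : DifferentiableOn ℝ ε (Icc a b))
    (hν : ∀ s ∈ Icc a b, HasDerivWithinAt ν (-(p' s) / (ε s + p s)) (Icc a b) s) :
    ∀ s ∈ Icc a b, ∀ t ∈ Icc a b, s ≤ t →
      Real.exp (-ν t) ≤ Real.exp (-ν s) * Real.sqrt (p t / p s) := by
  set f : ℝ → ℝ := fun x => -ν x - Real.log (p x) / 2 with hf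
  have hint : interior (Icc a b) = Ioo a b := interior_Icc
  -- f has derivative within interior
  have hfd : ∀ x ∈ interior (Icc a b),
      HasDerivWithinAt f (-(-(p' x) / (ε x + p x)) - (p' x / p x) / 2)
        (interior (Icc a b)) x := by
    intro x hx
    rw [hint] at hx
    have hxm : x ∈ Icc a b := ⟨hx.1.le, hx.2.le⟩
    have hν' := ((hν x hxm).mono Ioo_subset_Icc_self)
    have hp' := ((hp x hxm).mono Ioo_subset_Icc_self)
    have hlog : HasDerivWithinAt (fun y => Real.log (p y)) (p' x / p x) (Ioo a b) x := by
      have := (Real.hasDerivAt_log (hpε x hxm).1.ne').comp_hasDerivWithinAt x hp'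
      simpa [div_eq_mul_inv, mul_comm, Function.comp_def] using this
    rw [hint]
    simpa [hf, sub_eq_add_neg, Pi.add_def, Pi.neg_def] using (hν'.neg.sub (hlog.div_const 2))
  have hderiv_nonpos : ∀ x ∈ interior (Icc a b),
      -(-(p' x) / (ε x + p x)) - (p' x / p x) / 2 ≤ 0 := by
    intro x hx
    rw [hint] at hx
    have hxm : x ∈ Icc a b := ⟨hx.1.le, hx.2.le⟩
    obtain ⟨hp0, hpe⟩ := hpε x hxm
    have hd : HasDerivAt p (p' x) x := by
      refine (hp x hxm).hasDerivAt ?_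
      exact Icc_mem_nhds hx.1 hx.2
    have hp'0 : 0 ≤ p' x := deriv_nonneg_of_monotoneOn hx hpmono hd
    have h2p : 2 * p x ≤ ε x + p x := by linarith
    have h2p0 : (0:ℝ) < 2 * p x := by linarith
    have hεp0 : (0:ℝ) < ε x + p x := by linarith
    have key : p' x / (ε x + p x) ≤ p' x / (2 * p x) :=
      div_le_div_of_nonneg_left hp'0 h2p0 h2p
    have : (p' x / p x) / 2 = p' x / (2 * p x) := by ring
    rw [neg_div, neg_neg, this]
    linarith [key]
  -- continuity of f on Icc
  have hνc : ContinuousOn ν (Icc a b) := fun x hx => (hν x hx).continuousWithinAt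
  have hpc : ContinuousOn p (Icc a b) := fun x hx => (hp x hx).continuousWithinAt
  have hfc : ContinuousOn f (Icc a b) := by
    apply (hνc.neg.sub ?_)
    exact ((Real.continuousOn_log.comp hpc
      (fun x hx => (hpε x hx).1.ne')).div_const 2)
  have hanti : AntitoneOn f (Icc a b) :=
    antitoneOn_of_hasDerivWithinAt_nonpos (convex_Icc a b) hfc hfd hderiv_nonpos
  intro s hs t ht hst
  have hfts : f t ≤ f s := hanti hs ht hst
  have hps : 0 < p s := (hpε s hs).1
  have hpt : 0 < p t := (hpε t ht).1
  have hsqrt : Real.sqrt (p t / p s) =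
      Real.exp ((Real.log (p t) - Real.log (p s)) / 2) := by
    rw [← Real.log_div hpt.ne' hps.ne', ← Real.log_sqrt (by positivity),
      Real.exp_log (Real.sqrt_pos.2 (by positivity))]
  rw [hsqrt, ← Real.exp_add]
  apply Real.exp_le_exp.2
  simp only [hf] at hfts
  linarith
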